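/- (Theorem 2, necessity direction) Let ν be a rationalizing distribution for (X,P). Suppose there exist linear orders π, π' with ν(π) > 0, ν(π') > 0, and elements x, y, z ∈ X with x ≠ y such that both π and π' rank both x and y above z, U_π(z) ≠ U_{π'}(z), and U_π(x) = U_{π'}(y) (where U denotes weak upper contour set). Then the associated paths of π and π' form a pair of supported branching paths on the probability flow diagram, and hence ν is not the unique rationalizing distribution. -/
import Mathlib


open Finset
open scoped Classical

/-- A linear order on a finite set `α`, encoded as a ranking bijection to `Fin (card α)`;
higher value means more preferred. -/
abbrev RankOrd (α : Type*) [Fintype α] := α ≃ Fin (Fintype.card α)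

variable {α : Type*} [Fintype α] [DecidableEq α]

/-- `ν` is a probability distribution over linear orders. -/
def IsDist [Fintype α] (ν : RankOrd α → ℝ) : Prop :=
  (∀ π, 0 ≤ ν π) ∧ ∑ π : RankOrd α, ν π = 1

/-- The choice probabilities induced by a distribution over linear orders. -/
noncomputable def choiceProb (ν : RankOrd α → ℝ) (A : Finset α) (x : α) : ℝ :=
  ∑ π : RankOrd α, if ∀ y ∈ A, y ≠ x → (π y : ℕ) < (π x : ℕ) then ν π else 0

/-- `ν` rationalizes the system of choice probabilities `P`. -/
def Rationalizes (ν : RankOrd α → ℝ) (P : Finset α → α → ℝ) : Prop :=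
  IsDist ν ∧ ∀ A : Finset α, A.Nonempty → ∀ x ∈ A, P A x = choiceProb ν A x

/-- The Block–Marschak polynomial `q(x,A)` of a system of choice probabilities `P`. -/
noncomputable def bm (P : Finset α → α → ℝ) (x : α) (A : Finset α) : ℝ :=
  ∑ A' ∈ Finset.univ.powerset.filter (fun A' => A ⊆ A'),
    (-1 : ℝ) ^ (A' \ A).card * P A' x

/-- A path: a maximal chain `X = A_0 ⊋ A_1 ⊋ ⋯ ⊋ A_{|X|} = ∅` decreasing by one element. -/
def IsPath (ρ : ℕ → Finset α) : Prop :=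
  ρ 0 = Finset.univ ∧ ρ (Fintype.card α) = ∅ ∧
    ∀ i < Fintype.card α, ρ (i + 1) ⊆ ρ i ∧ (ρ i \ ρ (i + 1)).card = 1

/-- A supported path: all Block–Marschak edge weights along it are strictly positive. -/
def SupportedPath (P : Finset α → α → ℝ) (ρ : ℕ → Finset α) : Prop :=
  IsPath ρ ∧ ∀ i < Fintype.card α, ∀ x ∈ ρ i \ ρ (i + 1), 0 < bm P x (ρ i)

/-- Two paths are branching: they agree on a consecutive block of nodes
`{i,…,j} ⊆ {1,…,|X|-1}` while differing at positions `i-1` and `j+1`. -/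
def BranchingPair (ρ ρ' : ℕ → Finset α) : Prop :=
  ∃ i j, 1 ≤ i ∧ i ≤ j ∧ j ≤ Fintype.card α - 1 ∧
    ρ (i - 1) ≠ ρ' (i - 1) ∧ ρ (j + 1) ≠ ρ' (j + 1) ∧
    ∀ m, i ≤ m → m ≤ j → ρ m = ρ' m

/-- The path associated with the linear order `π`: `A_i` is `X` minus the top `i` elements. -/
def pathOf (π : RankOrd α) : ℕ → Finset α :=
  fun i => Finset.univ.filter (fun w => (π w : ℕ) < Fintype.card α - i)

/-- The weak upper contour set of `x` according to `π`. -/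
def upper (π : RankOrd α) (x : α) : Finset α :=
  Finset.univ.filter (fun w => (π x : ℕ) ≤ (π w : ℕ))

/-- `π ∈ M_{x,A}`: `π` ranks `X \ A` above `x` and `x` above `A \ {x}`. -/
def inM (π : RankOrd α) (x : α) (A : Finset α) : Prop :=
  (∀ z, z ∉ A → (π x : ℕ) < (π z : ℕ)) ∧ ∀ y ∈ A, y ≠ x → (π y : ℕ) < (π x : ℕ)

/-! ### Auxiliary lemmas -/

section Auxiliary

lemma mem_pathOf {π : RankOrd α} {i : ℕ} {w : α} :
    w ∈ pathOf π i ↔ (π w : ℕ) < Fintype.card α - i := by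
  simp [pathOf]

lemma mem_upper {π : RankOrd α} {x w : α} :
    w ∈ upper π x ↔ (π x : ℕ) ≤ (π w : ℕ) := by
  simp [upper]

lemma card_upper (π : RankOrd α) (x : α) :
    (upper π x).card = Fintype.card α - (π x : ℕ) := by
  have hx := (π x).isLt
  rw [show Fintype.card α - (π x : ℕ)
      = (Finset.univ : Finset (Fin (Fintype.card α - (π x : ℕ)))).card by
        simp]
  refine Finset.card_bij' (fun w hw => ⟨(π w : ℕ) - (π x : ℕ), by
      have h1 := (π w).isLt; have h2 := mem_upper.mp hw; omega⟩)
    (fun v hv => π.symm ⟨(π x : ℕ) + (v : ℕ), by have := v.isLt; omega⟩) ?_ ?_ ?_ ?_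
  · intro a ha; exact Finset.mem_univ _
  · intro v hv; rw [mem_upper, Equiv.apply_symm_apply]; simp
  · intro w hw
    have h1 := mem_upper.mp hw
    rw [Equiv.symm_apply_eq]
    ext
    simp
    omega
  · intro v hv
    simp only [Equiv.apply_symm_apply]
    simp

lemma alt_sum {β : Type*} [DecidableEq β] (s : Finset β) :
    ∑ B ∈ s.powerset, (-1 : ℝ) ^ B.card = if s = ∅ then 1 else 0 := by
  have h := Finset.sum_powerset_neg_one_pow_card (x := s)
  split_ifs with hs
  · subst hs; simp
  · rw [if_neg hs] at h
    exact_mod_cast h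

lemma pathOf_sdiff (π : RankOrd α) (i : ℕ) (hi : i < Fintype.card α) :
    pathOf π i \ pathOf π (i + 1)
      = {π.symm ⟨Fintype.card α - i - 1, by omega⟩} := by
  ext w
  rw [Finset.mem_sdiff, mem_pathOf, mem_pathOf, Finset.mem_singleton,
    Equiv.eq_symm_apply, Fin.ext_iff]
  simp only [Fin.val_mk]
  omega

lemma isPath_pathOf (π : RankOrd α) : IsPath (pathOf π) := by
  refine ⟨?_, ?_, ?_⟩
  · ext w; rw [mem_pathOf]; simpa using (π w).isLt
  · ext w; rw [mem_pathOf]; simp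
  · intro i hi
    refine ⟨?_, ?_⟩
    · intro w hw; rw [mem_pathOf] at *; omega
    · rw [pathOf_sdiff π i hi]; simp

lemma bm_inner_sum (τ : RankOrd α) (c : ℝ) (x : α) (A : Finset α) (hx : x ∈ A) :
    (∑ A' ∈ Finset.univ.powerset.filter (fun A' => A ⊆ A'),
      (-1 : ℝ) ^ (A' \ A).card *
        (if ∀ y ∈ A', y ≠ x → (τ y : ℕ) < (τ x : ℕ) then c else 0))
    = if inM τ x A then c else 0 := by
  have step1 : (∑ A' ∈ Finset.univ.powerset.filter (fun A' => A ⊆ A'),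
      (-1 : ℝ) ^ (A' \ A).card *
        (if ∀ y ∈ A', y ≠ x → (τ y : ℕ) < (τ x : ℕ) then c else 0))
      = ∑ B ∈ (Aᶜ : Finset α).powerset,
        (-1 : ℝ) ^ B.card *
          (if (∀ y ∈ A, y ≠ x → (τ y : ℕ) < (τ x : ℕ)) ∧
              (∀ b ∈ B, (τ b : ℕ) < (τ x : ℕ)) then c else 0) := by
    refine Finset.sum_nbij' (fun A' => A' \ A) (fun B => A ∪ B) ?_ ?_ ?_ ?_ ?_
    · intro A' hA'
      rw [Finset.mem_powerset]
      intro w hw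
      rw [Finset.mem_sdiff] at hw
      rw [Finset.mem_compl]
      exact hw.2
    · intro B hB
      rw [Finset.mem_filter]
      exact ⟨Finset.mem_powerset.mpr (Finset.subset_univ _), Finset.subset_union_left⟩
    · intro A' hA'
      rw [Finset.mem_filter] at hA'
      exact Finset.union_sdiff_of_subset hA'.2
    · intro B hB
      rw [Finset.mem_powerset] at hB
      refine Finset.union_sdiff_cancel_left ?_
      rw [Finset.disjoint_left]
      intro u hu hu2
      exact (Finset.mem_compl.mp (hB hu2)) hu
    · intro A' hA'
      rw [Finset.mem_filter] at hA'
      have hsub : A ⊆ A' := hA'.2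
      congr 1
      refine if_congr ?_ rfl rfl
      constructor
      · intro h
        refine ⟨fun y hy => h y (hsub hy), fun b hb => ?_⟩
        rw [Finset.mem_sdiff] at hb
        exact h b hb.1 (fun hbx => hb.2 (hbx ▸ hx))
      · rintro ⟨h1, h2⟩ u hu hux
        by_cases huA : u ∈ A
        · exact h1 u huA hux
        · exact h2 u (Finset.mem_sdiff.mpr ⟨hu, huA⟩)
  rw [step1]
  by_cases hCA : ∀ y ∈ A, y ≠ x → (τ y : ℕ) < (τ x : ℕ)
  · set D := (Aᶜ : Finset α).filter (fun b => (τ b : ℕ) < (τ x : ℕ)) with hD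
    have hcond : ∀ B ∈ (Aᶜ : Finset α).powerset,
        (((∀ y ∈ A, y ≠ x → (τ y : ℕ) < (τ x : ℕ)) ∧
          (∀ b ∈ B, (τ b : ℕ) < (τ x : ℕ))) ↔ B ⊆ D) := by
      intro B hB
      rw [Finset.mem_powerset] at hB
      constructor
      · rintro ⟨-, h2⟩ b hb
        rw [hD, Finset.mem_filter]
        exact ⟨hB hb, h2 b hb⟩
      · intro hBD
        exact ⟨hCA, fun b hb => (Finset.mem_filter.mp (hBD hb)).2⟩
    have step2 : (∑ B ∈ (Aᶜ : Finset α).powerset,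
        (-1 : ℝ) ^ B.card *
          (if (∀ y ∈ A, y ≠ x → (τ y : ℕ) < (τ x : ℕ)) ∧
              (∀ b ∈ B, (τ b : ℕ) < (τ x : ℕ)) then c else 0))
        = ∑ B ∈ D.powerset, (-1 : ℝ) ^ B.card * c := by
      rw [Finset.sum_congr rfl (fun B hB => by
        rw [mul_ite, mul_zero, if_congr (hcond B hB) rfl rfl])]
      rw [← Finset.sum_filter]
      congr 1
      ext B
      rw [Finset.mem_filter, Finset.mem_powerset, Finset.mem_powerset]
      constructor
      · exact fun h => h.2
      · intro h
        refine ⟨h.trans ?_, h⟩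
        rw [hD]
        exact Finset.filter_subset _ _
    rw [step2, ← Finset.sum_mul, alt_sum]
    have hDe : D = ∅ ↔ inM τ x A := by
      constructor
      · intro hDe
        refine ⟨?_, hCA⟩
        intro u hu
        have hux : u ≠ x := fun h => hu (h ▸ hx)
        have hnt : u ∉ D := hDe ▸ Finset.notMem_empty u
        rw [hD, Finset.mem_filter, Finset.mem_compl] at hnt
        push_neg at hnt
        have h2 := hnt hu
        have h3 : (τ u : ℕ) ≠ (τ x : ℕ) :=
          fun hh => hux (τ.injective (Fin.val_injective hh))
        omega
      · intro hM
        rw [hD, Finset.filter_eq_empty_iff]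
        intro b hb
        rw [Finset.mem_compl] at hb
        have := hM.1 b hb
        omega
    by_cases hM : inM τ x A
    · rw [if_pos hM, if_pos (hDe.mpr hM), one_mul]
    · rw [if_neg hM, if_neg (fun h => hM (hDe.mp h)), zero_mul]
  · rw [if_neg (fun hM => hCA hM.2)]
    apply Finset.sum_eq_zero
    intro B hB
    rw [if_neg (fun hc => hCA hc.1), mul_zero]

lemma bm_eq {P : Finset α → α → ℝ} {ν : RankOrd α → ℝ} (hν : Rationalizes ν P)
    (x : α) (A : Finset α) (hx : x ∈ A) :
    bm P x A = ∑ τ : RankOrd α, if inM τ x A then ν τ else 0 := by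
  unfold bm
  have h1 : ∀ A' ∈ Finset.univ.powerset.filter (fun A' => A ⊆ A'),
      (-1 : ℝ) ^ (A' \ A).card * P A' x
      = ∑ τ : RankOrd α, (-1 : ℝ) ^ (A' \ A).card *
          (if ∀ y ∈ A', y ≠ x → (τ y : ℕ) < (τ x : ℕ) then ν τ else 0) := by
    intro A' hA'
    have hsub : A ⊆ A' := (Finset.mem_filter.mp hA').2
    rw [hν.2 A' ⟨x, hsub hx⟩ x (hsub hx), choiceProb, Finset.mul_sum]
  rw [Finset.sum_congr rfl h1, Finset.sum_comm]
  exact Finset.sum_congr rfl fun τ _ => bm_inner_sum τ (ν τ) x A hx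

lemma supportedPath_of_pos {P : Finset α → α → ℝ} {ν : RankOrd α → ℝ}
    (hν : Rationalizes ν P) {π : RankOrd α} (hπ : 0 < ν π) :
    SupportedPath P (pathOf π) := by
  refine ⟨isPath_pathOf π, ?_⟩
  intro i hi u hu
  rw [pathOf_sdiff π i hi, Finset.mem_singleton] at hu
  subst hu
  have hval : (π (π.symm ⟨Fintype.card α - i - 1, by omega⟩) : ℕ)
      = Fintype.card α - i - 1 := by rw [Equiv.apply_symm_apply]
  have hwA : π.symm ⟨Fintype.card α - i - 1, by omega⟩ ∈ pathOf π i := by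
    rw [mem_pathOf, hval]; omega
  rw [bm_eq hν _ _ hwA]
  apply Finset.sum_pos'
  · intro τ _
    split_ifs
    · exact hν.1.1 τ
    · exact le_refl 0
  · refine ⟨π, Finset.mem_univ π, ?_⟩
    rw [if_pos ?_]
    · exact hπ
    constructor
    · intro u hu
      rw [mem_pathOf] at hu
      push_neg at hu
      omega
    · intro u hu hune
      rw [mem_pathOf] at hu
      have : (π u : ℕ) ≠ (π (π.symm ⟨Fintype.card α - i - 1, by omega⟩) : ℕ) :=
        fun h => hune (π.injective (Fin.val_injective h))
      omega

/-- Splice two orders at threshold `t`: take `π'` on the common top part and `π` below. -/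
def splice (π π' : RankOrd α) (t : ℕ)
    (hT : ∀ w, t ≤ (π w : ℕ) ↔ t ≤ (π' w : ℕ)) : RankOrd α where
  toFun w := if t ≤ (π w : ℕ) then π' w else π w
  invFun v := if t ≤ (v : ℕ) then π'.symm v else π.symm v
  left_inv w := by
    by_cases h : t ≤ (π w : ℕ)
    · simp only [if_pos h, if_pos ((hT w).mp h), Equiv.symm_apply_apply]
    · simp only [if_neg h, Equiv.symm_apply_apply]
  right_inv v := by
    by_cases h : t ≤ (v : ℕ)
    · have h2 : t ≤ (π (π'.symm v) : ℕ) := (hT _).mpr (by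
        rw [Equiv.apply_symm_apply]; exact h)
      simp only [if_pos h, if_pos h2, Equiv.apply_symm_apply]
    · have h2 : ¬ t ≤ (π (π.symm v) : ℕ) := by
        rw [Equiv.apply_symm_apply]; exact h
      simp only [if_neg h, if_neg h2, Equiv.apply_symm_apply]

lemma splice_apply (π π' : RankOrd α) (t : ℕ)
    (hT : ∀ w, t ≤ (π w : ℕ) ↔ t ≤ (π' w : ℕ)) (w : α) :
    splice π π' t hT w = if t ≤ (π w : ℕ) then π' w else π w := rfl

lemma splice_best_iff (π π' : RankOrd α) (t : ℕ)
    (hT : ∀ w, t ≤ (π w : ℕ) ↔ t ≤ (π' w : ℕ)) (A : Finset α) (x : α)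
    (hA : ∃ w ∈ A, t ≤ (π w : ℕ)) :
    (∀ y ∈ A, y ≠ x → ((splice π π' t hT) y : ℕ) < ((splice π π' t hT) x : ℕ)) ↔
    (∀ y ∈ A, y ≠ x → (π' y : ℕ) < (π' x : ℕ)) := by
  obtain ⟨w0, hw0A, hw0⟩ := hA
  have hw0' : t ≤ (π' w0 : ℕ) := (hT w0).mp hw0
  constructor
  · intro h y hy hyx
    have hx : t ≤ (π x : ℕ) := by
      by_cases hwx : w0 = x
      · exact hwx ▸ hw0
      · have h2 := h w0 hw0A hwx
        rw [splice_apply, splice_apply, if_pos hw0] at h2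
        by_contra hxc
        rw [if_neg hxc] at h2
        omega
    have hx' : t ≤ (π' x : ℕ) := (hT x).mp hx
    have hy2 := h y hy hyx
    rw [splice_apply, splice_apply, if_pos hx] at hy2
    by_cases hyT : t ≤ (π y : ℕ)
    · rwa [if_pos hyT] at hy2
    · have hy' : ¬ t ≤ (π' y : ℕ) := fun cc => hyT ((hT y).mpr cc)
      omega
  · intro h y hy hyx
    have hx' : t ≤ (π' x : ℕ) := by
      by_cases hwx : w0 = x
      · exact hwx ▸ hw0'
      · have := h w0 hw0A hwx
        omega
    have hx : t ≤ (π x : ℕ) := (hT x).mpr hx'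
    rw [splice_apply, splice_apply, if_pos hx]
    by_cases hyT : t ≤ (π y : ℕ)
    · rw [if_pos hyT]; exact h y hy hyx
    · rw [if_neg hyT]
      omega

lemma splice_best_iff_low (π π' : RankOrd α) (t : ℕ)
    (hT : ∀ w, t ≤ (π w : ℕ) ↔ t ≤ (π' w : ℕ)) (A : Finset α) (x : α)
    (hA : ∀ w ∈ A, ¬ t ≤ (π w : ℕ)) (hx : x ∈ A) :
    (∀ y ∈ A, y ≠ x → ((splice π π' t hT) y : ℕ) < ((splice π π' t hT) x : ℕ)) ↔
    (∀ y ∈ A, y ≠ x → (π y : ℕ) < (π x : ℕ)) := by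
  have e : ∀ u, u ∈ A → ((splice π π' t hT) u : ℕ) = (π u : ℕ) := by
    intro u hu
    rw [splice_apply, if_neg (hA u hu)]
  constructor
  · intro h y hy hyx
    have h2 := h y hy hyx
    rwa [e y hy, e x hx] at h2
  · intro h y hy hyx
    rw [e y hy, e x hx]
    exact h y hy hyx

lemma indswap {β : Type*} (C : β → Prop) [∀ b, Decidable (C b)] (τ ρ0 : β)
    [Decidable (τ = ρ0)] :
    (if C τ then (if τ = ρ0 then (1:ℝ) else 0) else 0)
      = (if τ = ρ0 then (if C ρ0 then (1:ℝ) else 0) else 0) := by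
  by_cases h : τ = ρ0
  · subst h; simp
  · simp [h]

lemma sum_ite_swap {β : Type*} [Fintype β] [DecidableEq β] (C : β → Prop)
    [∀ b, Decidable (C b)] (ν : β → ℝ) (ε : ℝ) (σ σ' π π' : β)
    (hkey : (if C σ then (1:ℝ) else 0) + (if C σ' then 1 else 0)
          = (if C π then 1 else 0) + (if C π' then 1 else 0)) :
    (∑ τ : β, if C τ then
        (ν τ + ε * (((if τ = σ then (1:ℝ) else 0) + (if τ = σ' then 1 else 0))
          - ((if τ = π then 1 else 0) + (if τ = π' then 1 else 0)))) else 0)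
    = ∑ τ : β, if C τ then ν τ else 0 := by
  have expand : ∀ τ : β,
      (if C τ then
        (ν τ + ε * (((if τ = σ then (1:ℝ) else 0) + (if τ = σ' then 1 else 0))
          - ((if τ = π then 1 else 0) + (if τ = π' then 1 else 0)))) else 0)
      = (if C τ then ν τ else 0)
        + ε * ((if C τ then (if τ = σ then (1:ℝ) else 0) else 0)
             + (if C τ then (if τ = σ' then (1:ℝ) else 0) else 0)
             - (if C τ then (if τ = π then (1:ℝ) else 0) else 0)
             - (if C τ then (if τ = π' then (1:ℝ) else 0) else 0)) := by
    intro τ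
    by_cases h : C τ
    · simp only [if_pos h]; ring
    · simp only [if_neg h]; ring
  rw [Finset.sum_congr rfl fun τ _ => expand τ, Finset.sum_add_distrib, ← Finset.mul_sum]
  have hsum2 : ∀ ρ0 : β,
      (∑ τ : β, if C τ then (if τ = ρ0 then (1:ℝ) else 0) else 0)
        = (if C ρ0 then (1:ℝ) else 0) := by
    intro ρ0
    rw [Finset.sum_congr rfl fun τ _ => indswap C τ ρ0]
    simp
  simp only [Finset.sum_sub_distrib, Finset.sum_add_distrib, hsum2]
  have h0 : (if C σ then (1:ℝ) else 0) + (if C σ' then 1 else 0)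
      - (if C π then 1 else 0) - (if C π' then 1 else 0) = 0 := by linarith
  rw [h0, mul_zero, add_zero]

end Auxiliary

/-- Theorem 2, necessity direction: if two orders in the support of a rationalizing `ν`
satisfy the contour-set conditions, then their associated paths form a pair of supported
branching paths, and `ν` is not the unique rationalizing distribution. -/
theorem supported_branching_of_contour_conditions {α : Type*} [Fintype α] [DecidableEq α]
    (P : Finset α → α → ℝ) (ν : RankOrd α → ℝ) (hν : Rationalizes ν P)
    (π π' : RankOrd α) (hπ : 0 < ν π) (hπ' : 0 < ν π')
    (x y z : α) (hxy : x ≠ y)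
    (h1 : (π z : ℕ) < (π x : ℕ)) (h2 : (π z : ℕ) < (π y : ℕ))
    (h3 : (π' z : ℕ) < (π' x : ℕ)) (h4 : (π' z : ℕ) < (π' y : ℕ))
    (hz : upper π z ≠ upper π' z) (hU : upper π x = upper π' y) :
    SupportedPath P (pathOf π) ∧ SupportedPath P (pathOf π') ∧
      BranchingPair (pathOf π) (pathOf π') ∧
      ∃ ν' : RankOrd α → ℝ, ν' ≠ ν ∧ Rationalizes ν' P := by
  classical
  set n := Fintype.card α with hn
  have hn0 : 0 < n := Fintype.card_pos_iff.mpr ⟨x⟩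
  have hππ' : π ≠ π' := fun h => hz (h ▸ rfl)
  have hr : (π' y : ℕ) = (π x : ℕ) := by
    have hc := congrArg Finset.card hU
    rw [card_upper, card_upper] at hc
    have := (π x).isLt; have := (π' y).isLt
    omega
  set r := (π x : ℕ) with hrdef
  have hrn : r < n := (π x).isLt
  have hUiff : ∀ w, r ≤ (π w : ℕ) ↔ r ≤ (π' w : ℕ) := by
    intro w
    have h := Finset.ext_iff.mp hU w
    rw [mem_upper, mem_upper, hr] at h
    exact h
  have hzr : (π z : ℕ) < r := h1
  have hzr' : (π' z : ℕ) < r := by omega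
  set a := n - r with ha
  have ha1 : 1 ≤ a := by omega
  have hpath_a : pathOf π a = pathOf π' a := by
    ext w
    rw [mem_pathOf, mem_pathOf]
    have h := hUiff w
    omega
  have hdiff_am1 : pathOf π (a - 1) ≠ pathOf π' (a - 1) := by
    intro hcon
    have hx1 : x ∈ pathOf π (a - 1) := by rw [mem_pathOf]; omega
    rw [hcon, mem_pathOf] at hx1
    have hge : r ≤ (π' x : ℕ) := (hUiff x).mp le_rfl
    have hxr : (π' x : ℕ) = (π' y : ℕ) := by omega
    exact hxy (π'.injective (Fin.val_injective hxr))
  have hk0 : ∃ k, a < k ∧ k ≤ n ∧ pathOf π k ≠ pathOf π' k := by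
    by_cases hzz : (π z : ℕ) = (π' z : ℕ)
    · refine ⟨n - (π z : ℕ), by omega, by omega, ?_⟩
      intro hcon
      apply hz
      ext w
      rw [mem_upper, mem_upper, ← hzz]
      have h := Finset.ext_iff.mp hcon w
      rw [mem_pathOf, mem_pathOf] at h
      omega
    · rcases Nat.lt_or_ge (π z : ℕ) (π' z : ℕ) with hlt | hge
      · refine ⟨n - (π' z : ℕ), by omega, by omega, ?_⟩
        intro hcon
        have h := Finset.ext_iff.mp hcon z
        rw [mem_pathOf, mem_pathOf] at h
        omega
      · refine ⟨n - (π z : ℕ), by omega, by omega, ?_⟩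
        intro hcon
        have h := Finset.ext_iff.mp hcon z
        rw [mem_pathOf, mem_pathOf] at h
        omega
  have hQ : ∃ k, a < k ∧ pathOf π k ≠ pathOf π' k :=
    hk0.imp fun k hk => ⟨hk.1, hk.2.2⟩
  obtain ⟨K, hKa, hKne, hKmin⟩ : ∃ K, a < K ∧ pathOf π K ≠ pathOf π' K ∧
      ∀ m, a < m → pathOf π m ≠ pathOf π' m → K ≤ m :=
    ⟨Nat.find hQ, (Nat.find_spec hQ).1, (Nat.find_spec hQ).2,
      fun m hm1 hm2 => Nat.find_le ⟨hm1, hm2⟩⟩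
  obtain ⟨k0, hk01, hk02, hk03⟩ := hk0
  have hKle : K ≤ k0 := hKmin k0 hk01 hk03
  set j := K - 1 with hj
  have hjge : a ≤ j := by omega
  have hjle : j ≤ n - 1 := by omega
  have hjK : j + 1 = K := by omega
  have hagree : ∀ m, a ≤ m → m ≤ j → pathOf π m = pathOf π' m := by
    intro m hm1 hm2
    rcases Nat.eq_or_lt_of_le hm1 with he | hlt
    · rw [← he]; exact hpath_a
    · by_contra hne
      have := hKmin m hlt hne
      omega
  have hbranch : BranchingPair (pathOf π) (pathOf π') :=
    ⟨a, j, ha1, hjge, hjle, hdiff_am1, by rw [hjK]; exact hKne, hagree⟩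
  -- construct the alternative distribution
  set t := n - j with ht
  have hTj : pathOf π j = pathOf π' j := hagree j hjge le_rfl
  have hT : ∀ w, t ≤ (π w : ℕ) ↔ t ≤ (π' w : ℕ) := by
    intro w
    have h := Finset.ext_iff.mp hTj w
    rw [mem_pathOf, mem_pathOf] at h
    omega
  have hT' : ∀ w, t ≤ (π' w : ℕ) ↔ t ≤ (π w : ℕ) := fun w => (hT w).symm
  set σ := splice π π' t hT with hσ
  set σ' := splice π' π t hT' with hσ'
  have hTop : ¬ ∀ w, t ≤ (π w : ℕ) → (π w : ℕ) = (π' w : ℕ) := by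
    intro hcon
    apply hdiff_am1
    ext w
    rw [mem_pathOf, mem_pathOf]
    by_cases hw : t ≤ (π w : ℕ)
    · rw [hcon w hw]
    · have hw' : ¬ t ≤ (π' w : ℕ) := fun cc => hw ((hT w).mpr cc)
      omega
  have hLow : ∃ w, ¬ t ≤ (π w : ℕ) ∧ (π w : ℕ) ≠ (π' w : ℕ) := by
    by_contra hcon
    push_neg at hcon
    apply hKne
    ext w
    rw [mem_pathOf, mem_pathOf]
    by_cases hw : t ≤ (π w : ℕ)
    · have hw' := (hT w).mp hw
      omega
    · rw [hcon w (by omega)]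
  have hσπ : σ ≠ π := by
    intro hcon
    apply hTop
    intro w hw
    have hc := DFunLike.congr_fun hcon w
    rw [hσ, splice_apply, if_pos hw] at hc
    exact (congrArg Fin.val hc).symm
  have hσπ' : σ ≠ π' := by
    intro hcon
    obtain ⟨w, hw1, hw2⟩ := hLow
    apply hw2
    have hc := DFunLike.congr_fun hcon w
    rw [hσ, splice_apply, if_neg hw1] at hc
    exact congrArg Fin.val hc
  have hσ'π : σ' ≠ π := by
    intro hcon
    obtain ⟨w, hw1, hw2⟩ := hLow
    apply hw2
    have hc := DFunLike.congr_fun hcon w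
    have hw1' : ¬ t ≤ (π' w : ℕ) := fun cc => hw1 ((hT w).mpr cc)
    rw [hσ', splice_apply, if_neg hw1'] at hc
    exact (congrArg Fin.val hc).symm
  have hσ'π' : σ' ≠ π' := by
    intro hcon
    apply hTop
    intro w hw
    have hc := DFunLike.congr_fun hcon w
    rw [hσ', splice_apply, if_pos ((hT w).mp hw)] at hc
    exact congrArg Fin.val hc
  set ε := min (ν π) (ν π') with hε
  have hε0 : 0 < ε := lt_min hπ hπ'
  have hεπ : ε ≤ ν π := min_le_left _ _
  have hεπ' : ε ≤ ν π' := min_le_right _ _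
  set ν' : RankOrd α → ℝ := fun τ =>
    ν τ + ε * (((if τ = σ then (1:ℝ) else 0) + (if τ = σ' then 1 else 0))
      - ((if τ = π then 1 else 0) + (if τ = π' then 1 else 0))) with hν'def
  have hνπeq : ν' π = ν π - ε := by
    simp only [hν'def]
    rw [if_neg (Ne.symm hσπ), if_neg (Ne.symm hσ'π), if_neg hππ']
    norm_num [sub_eq_add_neg]
  have hνnonneg := hν.1.1
  have hν'nonneg : ∀ τ, 0 ≤ ν' τ := by
    intro τ
    rcases eq_or_ne τ π with rfl | hτ1
    · rw [hνπeq]; linarith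
    rcases eq_or_ne τ π' with hτ2 | hτ2
    · rw [hτ2]
      simp only [hν'def]
      rw [if_neg (Ne.symm hσπ'), if_neg (Ne.symm hσ'π'), if_neg (Ne.symm hππ')]
      have hb := hνnonneg π'
      norm_num
      linarith
    · simp only [hν'def]
      rw [if_neg hτ1, if_neg hτ2]
      have h3 := hνnonneg τ
      have i1 : (0:ℝ) ≤ (if τ = σ then (1:ℝ) else 0) := by split_ifs <;> norm_num
      have i2 : (0:ℝ) ≤ (if τ = σ' then (1:ℝ) else 0) := by split_ifs <;> norm_num
      have i3 : (0:ℝ) ≤ ε * ((if τ = σ then (1:ℝ) else 0) + (if τ = σ' then (1:ℝ) else 0)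
          - ((0:ℝ) + (0:ℝ))) := mul_nonneg hε0.le (by linarith)
      linarith
  have hsum : ∑ τ : RankOrd α, ν' τ = 1 := by
    simp only [hν'def]
    rw [Finset.sum_add_distrib, hν.1.2, ← Finset.mul_sum]
    have e1 : (∑ τ : RankOrd α,
        (((if τ = σ then (1:ℝ) else 0) + (if τ = σ' then 1 else 0))
          - ((if τ = π then 1 else 0) + (if τ = π' then 1 else 0)))) = 0 := by
      simp [Finset.sum_sub_distrib, Finset.sum_add_distrib]
    rw [e1, mul_zero, add_zero]
  have hkey : ∀ (B : Finset α), B.Nonempty → ∀ v ∈ B,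
      choiceProb ν' B v = choiceProb ν B v := by
    intro B hBne v hvB
    have key0 : (if (∀ u ∈ B, u ≠ v → (σ u : ℕ) < (σ v : ℕ)) then (1:ℝ) else 0)
        + (if (∀ u ∈ B, u ≠ v → (σ' u : ℕ) < (σ' v : ℕ)) then (1:ℝ) else 0)
        = (if (∀ u ∈ B, u ≠ v → (π u : ℕ) < (π v : ℕ)) then (1:ℝ) else 0)
        + (if (∀ u ∈ B, u ≠ v → (π' u : ℕ) < (π' v : ℕ)) then (1:ℝ) else 0) := by
      by_cases hB : ∃ w ∈ B, t ≤ (π w : ℕ)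
      · have hB' : ∃ w ∈ B, t ≤ (π' w : ℕ) := by
          obtain ⟨w, hw1, hw2⟩ := hB
          exact ⟨w, hw1, (hT w).mp hw2⟩
        rw [if_congr (splice_best_iff π π' t hT B v hB) rfl rfl,
          if_congr (splice_best_iff π' π t hT' B v hB') rfl rfl]
        ring
      · push_neg at hB
        have hB2 : ∀ w ∈ B, ¬ t ≤ (π w : ℕ) := fun w hw => by
          have := hB w hw; omega
        have hB2' : ∀ w ∈ B, ¬ t ≤ (π' w : ℕ) := fun w hw cc => hB2 w hw ((hT w).mpr cc)
        rw [if_congr (splice_best_iff_low π π' t hT B v hB2 hvB) rfl rfl,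
          if_congr (splice_best_iff_low π' π t hT' B v hB2' hvB) rfl rfl]
    unfold choiceProb
    simp only [hν'def]
    exact sum_ite_swap (fun τ : RankOrd α => ∀ u ∈ B, u ≠ v → (τ u : ℕ) < (τ v : ℕ))
      ν ε σ σ' π π' key0
  refine ⟨supportedPath_of_pos hν hπ, supportedPath_of_pos hν hπ', hbranch,
    ν', ?_, ⟨⟨hν'nonneg, hsum⟩, ?_⟩⟩
  · intro hcon
    have hc := congrFun hcon π
    rw [hνπeq] at hc
    linarith
  · intro B hB v hvB
    rw [hν.2 B hB v hvB]
    exact (hkey B hB v hvB).symm
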